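/- For all integers p ≥ 0, q ≥ 0 and rational x: C(x, p+q) = C(x, p)·C(x, q) + Σ_{i=1}^{min(p,q)} (-1)^i · (C(x+i, i)·C(x, i)·C(2i, i)²) / (2·C(2i-1, i-1)²) · C(x-i, p-i)·C(x-i, q-i) / (C(p+i, i)·C(q+i, i)), and in particular for p = q = 1: C(x, 2) = C(x,1)² - (x+1)x·2²/(2·1)·(1/(2·2)) = x² - x(x+1)/2. -/

import Mathlib

/-- Generalized binomial coefficient `C(x, k) = x(x-1)⋯(x-k+1)/k!` for rational `x`. -/
noncomputable def gchoose (x : ℚ) (k : ℕ) : ℚ :=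
  (∏ i ∈ Finset.range k, (x - i)) / (Nat.factorial k)

lemma fact_ne (k : ℕ) : (Nat.factorial k : ℚ) ≠ 0 := by
  exact_mod_cast Nat.factorial_ne_zero k

lemma gchoose_zero (x : ℚ) : gchoose x 0 = 1 := by simp [gchoose]

lemma gchoose_succ_shift (y : ℚ) (n : ℕ) :
    gchoose y (n + 1) * (n + 1) = gchoose (y - 1) n * y := by
  unfold gchoose
  rw [Finset.prod_range_succ']
  push_cast [Nat.factorial_succ]
  have h1 : ∀ i ∈ Finset.range n, y - ((i:ℚ) + 1) = (y - 1) - i := by intros; ring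
  rw [Finset.prod_congr rfl h1]
  field_simp
  ring

lemma gchoose_succ (y : ℚ) (n : ℕ) :
    gchoose y (n + 1) * (n + 1) = gchoose y n * (y - n) := by
  unfold gchoose
  rw [Finset.prod_range_succ]
  push_cast [Nat.factorial_succ]
  field_simp

lemma gchoose_nat_zero (n k : ℕ) (h : n < k) : gchoose (n : ℚ) k = 0 := by
  unfold gchoose
  rw [Finset.prod_eq_zero (Finset.mem_range.mpr h) (by simp)]
  simp

lemma gchoose_natCast (n k : ℕ) : gchoose (n : ℚ) k = (n.choose k : ℚ) := by
  induction k with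
  | zero => simp [gchoose_zero]
  | succ k ih =>
    by_cases h : k + 1 ≤ n
    · have h2 := gchoose_succ (n : ℚ) k
      have h3 : (n.choose (k+1) : ℚ) * (k + 1) = (n.choose k : ℚ) * ((n:ℚ) - k) := by
        have := Nat.choose_succ_right_eq n k
        have hc : ((n - k : ℕ) : ℚ) = (n:ℚ) - k := by
          have : k ≤ n := by omega
          push_cast [this]; ring
        calc (n.choose (k+1) : ℚ) * (k + 1) = ((n.choose (k+1) * (k+1) : ℕ) : ℚ) := by push_cast; ring
        _ = ((n.choose k * (n - k) : ℕ) : ℚ) := by rw [this]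
        _ = (n.choose k : ℚ) * ((n:ℚ) - k) := by push_cast; rw [hc]
      have hk : ((k:ℚ) + 1) ≠ 0 := by positivity
      rw [ih] at h2
      apply mul_right_cancel₀ hk
      rw [h2, h3]
    · rw [gchoose_nat_zero n (k+1) (by omega), Nat.choose_eq_zero_of_lt (by omega)]
      simp

lemma gchoose_split (x : ℚ) (a b : ℕ) :
    gchoose x (a + b) * ((a + b).choose a : ℚ) = gchoose x a * gchoose (x - a) b := by
  unfold gchoose
  rw [Finset.prod_range_add]
  have h1 : ∀ i ∈ Finset.range b, x - ((a + i : ℕ) : ℚ) = (x - a) - i := by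
    intros i _; push_cast; ring
  rw [Finset.prod_congr rfl h1]
  have hf : ((a+b).choose a : ℚ) * (a.factorial : ℚ) * (b.factorial : ℚ) = ((a+b).factorial : ℚ) := by
    have h := Nat.choose_mul_factorial_mul_factorial (Nat.le_add_right a b)
    rw [Nat.add_sub_cancel_left] at h
    exact_mod_cast congrArg (Nat.cast (R := ℚ)) h
  field_simp
  rw [← hf]
  ring

noncomputable def Gz (x : ℚ) (n : ℤ) : ℚ := if 0 ≤ n then gchoose x n.toNat else 0

noncomputable def cB (n : ℕ) (m : ℤ) : ℚ := if 0 ≤ m then (n.choose m.toNat : ℚ) else 0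

lemma Gz_neg {x : ℚ} {n : ℤ} (h : n < 0) : Gz x n = 0 := by simp [Gz, not_le.mpr h]

lemma Gz_natCast (x : ℚ) (n : ℕ) : Gz x (n : ℤ) = gchoose x n := by simp [Gz]

lemma cB_neg {n : ℕ} {m : ℤ} (h : m < 0) : cB n m = 0 := by simp [cB, not_le.mpr h]

lemma cB_natCast (n m : ℕ) : cB n (m : ℤ) = (n.choose m : ℚ) := by simp [cB]

lemma Gz_shift (y : ℚ) (n : ℤ) :
    Gz y (n + 1) * ((n : ℚ) + 1) = Gz (y - 1) n * y := by
  rcases le_or_gt 0 n with h | h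
  · lift n to ℕ using h
    rw [show ((n:ℤ) + 1) = ((n + 1 : ℕ) : ℤ) by push_cast; ring, Gz_natCast, Gz_natCast]
    push_cast
    exact gchoose_succ_shift y n
  · rcases eq_or_lt_of_le (Int.add_one_le_iff.mpr h) with h1 | h1
    · obtain rfl : n = -1 := by omega
      rw [Gz_neg (by norm_num : (-1:ℤ) < 0)]
      norm_num
    · rw [Gz_neg h, Gz_neg (by omega)]
      simp

lemma Gz_succ (y : ℚ) (n : ℤ) :
    Gz y (n + 1) * ((n : ℚ) + 1) = Gz y n * (y - n) := by
  rcases le_or_gt 0 n with h | h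
  · lift n to ℕ using h
    rw [show ((n:ℤ) + 1) = ((n + 1 : ℕ) : ℤ) by push_cast; ring, Gz_natCast, Gz_natCast]
    push_cast
    exact gchoose_succ y n
  · rcases eq_or_lt_of_le (Int.add_one_le_iff.mpr h) with h1 | h1
    · obtain rfl : n = -1 := by omega
      rw [Gz_neg (by norm_num : (-1:ℤ) < 0)]
      norm_num
    · rw [Gz_neg h, Gz_neg (by omega)]
      simp

lemma cB_pascal (n : ℕ) (m : ℤ) : cB (n + 1) m = cB n m + cB n (m - 1) := by
  rcases lt_trichotomy m 0 with h | h | h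
  · rw [cB_neg h, cB_neg h, cB_neg (by omega)]; ring
  · subst h
    simp [cB_natCast, cB_neg (show (0:ℤ) - 1 < 0 by omega)]
    norm_num [cB, Nat.choose]
  · obtain ⟨m', rfl⟩ : ∃ m' : ℕ, m = ((m' + 1 : ℕ) : ℤ) := ⟨(m - 1).toNat, by omega⟩
    rw [show ((m' + 1 : ℕ) : ℤ) - 1 = (m' : ℤ) by push_cast; ring]
    rw [cB_natCast, cB_natCast, cB_natCast, Nat.choose_succ_succ']
    push_cast; ring

lemma cB_ratio (n : ℕ) (m : ℤ) :
    cB n m * (m : ℚ) = cB n (m - 1) * ((n : ℚ) - (m : ℚ) + 1) := by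
  rcases lt_trichotomy m 0 with h | h | h
  · rw [cB_neg h, cB_neg (by omega)]; ring
  · subst h; rw [cB_neg (by omega : (0:ℤ) - 1 < 0)]; simp
  · obtain ⟨m', rfl⟩ : ∃ m' : ℕ, m = ((m' + 1 : ℕ) : ℤ) := ⟨(m - 1).toNat, by omega⟩
    rw [show ((m' + 1 : ℕ) : ℤ) - 1 = (m' : ℤ) by push_cast; ring]
    rw [cB_natCast, cB_natCast]
    rcases le_or_gt (m' + 1) n with h2 | h2
    · have := Nat.choose_succ_right_eq n m'
      have hc : ((n - m' : ℕ) : ℚ) = (n : ℚ) - m' := by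
        have : m' ≤ n := by omega
        push_cast [this]; ring
      push_cast
      calc (n.choose (m'+1) : ℚ) * ((m':ℚ) + 1) = ((n.choose (m'+1) * (m'+1) : ℕ) : ℚ) := by push_cast; ring
      _ = ((n.choose m' * (n - m') : ℕ) : ℚ) := by rw [this]
      _ = (n.choose m' : ℚ) * ((n:ℚ) - ((m':ℚ) + 1) + 1) := by push_cast; rw [hc]; ring
    · rw [Nat.choose_eq_zero_of_lt (by omega)]
      rcases eq_or_lt_of_le (Nat.le_of_lt_succ h2) with h3 | h3
      · push_cast [← h3]; ring
      · rw [Nat.choose_eq_zero_of_lt h3]; simp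

noncomputable def Tt (p q : ℕ) (x : ℚ) (k : ℤ) : ℚ :=
  (-1 : ℚ) ^ k * cB (p + q) ((p : ℤ) - k) * Gz (x + k) ((p : ℤ) + k) * Gz (x - k) ((q : ℤ) - k)

noncomputable def Hh (p q : ℕ) (x : ℚ) (k : ℤ) : ℚ :=
  (-1 : ℚ) ^ k * ((k : ℚ) - x - 1) * ((k : ℚ) + p) * cB (p + q) ((p : ℤ) - k) *
    Gz (x + k) ((p : ℤ) + k) * Gz (x - k) ((q : ℤ) + 1 - k)

lemma key (p q : ℕ) (x : ℚ) (k : ℤ) :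
    2 * ((q : ℚ) + 1) * (x - q) * Tt p (q + 1) x k
      = 2 * (x - p - q) * (x - q) * Tt p q x k + (Hh p q x (k + 1) - Hh p q x k) := by
  have h1 : Gz (x + k + 1) ((p : ℤ) + k + 1) * ((p : ℚ) + (k : ℚ) + 1)
      = Gz (x + k) ((p : ℤ) + k) * (x + k + 1) := by
    have := Gz_shift (x + k + 1) ((p : ℤ) + k)
    push_cast at this
    rw [show x + (k : ℚ) + 1 - 1 = x + k by ring] at this
    linarith [this]
  have h2 : Gz (x - k) ((q : ℤ) + 1 - k) * ((q : ℚ) + 1 - k)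
      = Gz (x - k - 1) ((q : ℤ) - k) * (x - k) := by
    have := Gz_shift (x - k) ((q : ℤ) - k)
    push_cast at this
    rw [show (q : ℤ) - k + 1 = (q : ℤ) + 1 - k by ring] at this
    rw [show x - (k:ℚ) - 1 = x - k - 1 by ring] at this
    linarith [this]
  have h3 : Gz (x - k) ((q : ℤ) + 1 - k) * ((q : ℚ) + 1 - k)
      = Gz (x - k) ((q : ℤ) - k) * (x - q) := by
    have := Gz_succ (x - k) ((q : ℤ) - k)
    push_cast at this
    rw [show (q : ℤ) - k + 1 = (q : ℤ) + 1 - k by ring] at this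
    rw [show x - (k:ℚ) - ((q:ℚ) - k) = x - q by ring] at this
    linarith [this]
  have h4 : cB (p + q + 1) ((p : ℤ) - k) = cB (p + q) ((p : ℤ) - k) + cB (p + q) ((p : ℤ) - k - 1) := by
    exact cB_pascal (p + q) ((p : ℤ) - k)
  have h5 : cB (p + q) ((p : ℤ) - k) * ((p : ℚ) - k) = cB (p + q) ((p : ℤ) - k - 1) * ((q : ℚ) + k + 1) := by
    have := cB_ratio (p + q) ((p : ℤ) - k)
    push_cast at this
    rw [show (p : ℚ) + q - ((p:ℚ) - k) + 1 = (q:ℚ) + k + 1 by ring] at this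
    exact this
  have hs : (-1 : ℚ) ^ (k + 1) = -(-1 : ℚ) ^ k := by
    rw [zpow_add_one₀ (by norm_num : (-1 : ℚ) ≠ 0)]
    ring
  unfold Tt Hh
  rw [hs]
  rw [show ((p : ℤ) + (k + 1)) = (p : ℤ) + k + 1 by ring,
      show ((p : ℤ) - (k + 1)) = (p : ℤ) - k - 1 by ring,
      show ((q : ℤ) + 1 - (k + 1)) = (q : ℤ) - k by ring,
      show (x + (k + 1 : ℤ)) = x + k + 1 by push_cast; ring,
      show (x - (k + 1 : ℤ)) = x - k - 1 by push_cast; ring,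
      show ((q : ℤ) + 1 : ℤ) - k = (q : ℤ) + 1 - k from rfl]
  rw [show (p + (q + 1)) = p + q + 1 from rfl, h4]
  push_cast
  set σ := (-1 : ℚ) ^ k with hσ
  set A := Gz (x + k) ((p : ℤ) + k)
  set A' := Gz (x + k + 1) ((p : ℤ) + k + 1)
  set B := Gz (x - k) ((q : ℤ) + 1 - k)
  set B' := Gz (x - k - 1) ((q : ℤ) - k)
  set B0 := Gz (x - k) ((q : ℤ) - k)
  set C0 := cB (p + q) ((p : ℤ) - k)
  set C0' := cB (p + q) ((p : ℤ) - k - 1)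
  linear_combination (σ * (((k:ℚ) - x) * C0' * B')) * h1 + (σ * ((x + k + 1) * C0' * A)) * h2 +
    (σ * (2 * (x - p - q) * C0 * A)) * h3 - (σ * (((k:ℚ) + x - 2 * q - 1) * A * B)) * h5

noncomputable def Sm (p q : ℕ) (x : ℚ) : ℚ :=
  ∑ i ∈ Finset.range (p + q + 1), Tt p q x ((i : ℤ) - p)

lemma Tt_top (p q : ℕ) (x : ℚ) : Tt p q x ((q : ℤ) + 1) = 0 := by
  unfold Tt
  rw [Gz_neg (show (q : ℤ) - ((q:ℤ) + 1) < 0 by omega)]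
  ring

lemma Hh_bot (p q : ℕ) (x : ℚ) : Hh p q x (-(p : ℤ)) = 0 := by
  unfold Hh
  push_cast
  ring

lemma Hh_top (p q : ℕ) (x : ℚ) : Hh p q x ((q : ℤ) + 2) = 0 := by
  unfold Hh
  rw [Gz_neg (show (q : ℤ) + 1 - ((q:ℤ) + 2) < 0 by omega)]
  ring

lemma step (p q : ℕ) (x : ℚ) :
    2 * ((q : ℚ) + 1) * (x - q) * Sm p (q + 1) x = 2 * (x - p - q) * (x - q) * Sm p q x := by
  have tele : ∑ i ∈ Finset.range (p + q + 2),
      (Hh p q x (((i : ℤ) - p) + 1) - Hh p q x ((i : ℤ) - p)) = 0 := by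
    have h := Finset.sum_range_sub (fun i => Hh p q x ((i : ℤ) - p)) (p + q + 2)
    have h2 : ∀ i ∈ Finset.range (p + q + 2),
        Hh p q x (((i + 1 : ℕ) : ℤ) - p) - Hh p q x ((i : ℤ) - p)
          = Hh p q x (((i : ℤ) - p) + 1) - Hh p q x ((i : ℤ) - p) := by
      intro i _
      congr 2
      push_cast; ring
    rw [Finset.sum_congr rfl h2] at h
    rw [h, show ((p + q + 2 : ℕ) : ℤ) - p = (q : ℤ) + 2 by push_cast; ring,
      show ((0 : ℕ) : ℤ) - (p:ℤ) = -(p:ℤ) by push_cast; ring, Hh_top, Hh_bot]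
    norm_num
  have expand : Sm p (q + 1) x = ∑ i ∈ Finset.range (p + q + 2), Tt p (q + 1) x ((i : ℤ) - p) := by
    rfl
  have expand2 : ∑ i ∈ Finset.range (p + q + 2), Tt p q x ((i : ℤ) - p) = Sm p q x := by
    rw [Finset.sum_range_succ]
    unfold Sm
    rw [show ((p + q + 1 : ℕ) : ℤ) - p = (q : ℤ) + 1 by push_cast; ring, Tt_top]
    ring
  rw [expand, Finset.mul_sum]
  have hc := Finset.sum_congr rfl (fun i (_ : i ∈ Finset.range (p + q + 2)) => key p q x ((i:ℤ) - p))
  rw [hc, Finset.sum_add_distrib, tele, add_zero, ← Finset.mul_sum, expand2]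

lemma Tt_zero (p : ℕ) (x : ℚ) : Tt p 0 x 0 = gchoose x p := by
  unfold Tt
  rw [show ((p:ℤ) - 0) = ((p:ℕ):ℤ) by ring, show ((p:ℤ) + 0) = ((p:ℕ):ℤ) by ring,
    show (((0:ℕ)):ℤ) - 0 = (((0:ℕ)):ℤ) by ring, Gz_natCast, Gz_natCast, cB_natCast,
    gchoose_zero]
  norm_num [Nat.choose_self]

lemma base (p : ℕ) (x : ℚ) : Sm p 0 x = gchoose x p := by
  unfold Sm
  rw [Finset.sum_range_succ]
  have h1 : ∀ i ∈ Finset.range p, Tt p 0 x ((i : ℤ) - p) = 0 := by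
    intro i hi
    have hi' := Finset.mem_range.mp hi
    unfold Tt
    have hz : cB (p + 0) ((p:ℤ) - ((i:ℤ) - p)) = 0 := by
      rw [show ((p:ℤ) - ((i:ℤ) - p)) = ((2 * p - i : ℕ) : ℤ) by omega, cB_natCast,
        Nat.choose_eq_zero_of_lt (by omega), Nat.cast_zero]
    rw [hz]; ring
  rw [Finset.sum_eq_zero h1, show ((p : ℕ) : ℤ) - (p:ℤ) = 0 by omega, Tt_zero]
  ring

lemma main_id (p q : ℕ) (x : ℚ) : Sm p q x = gchoose x p * gchoose (x - p) q := by
  induction q with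
  | zero => rw [base, gchoose_zero, mul_one]
  | succ q IH =>
    by_cases hx : x = (q : ℚ)
    · subst hx
      have hL : Sm p (q + 1) (q : ℚ) = 0 := by
        unfold Sm
        apply Finset.sum_eq_zero
        intro i hi
        have hi' := Finset.mem_range.mp hi
        rcases le_or_gt i (p + q) with hc | hc
        · obtain ⟨m, hm⟩ : ∃ m : ℕ, (q:ℤ) - ((i:ℤ) - p) = (m:ℤ) :=
            ⟨((q:ℤ) - ((i:ℤ) - p)).toNat, by omega⟩
          unfold Tt
          have e1 : (((q + 1 : ℕ)):ℤ) - ((i:ℤ) - p) = ((m + 1 : ℕ):ℤ) := by omega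
          have e2 : (q:ℚ) - ((((i:ℤ) - (p:ℤ) : ℤ)) : ℚ) = ((m:ℕ):ℚ) := by exact_mod_cast hm
          rw [e1, e2, Gz_natCast, gchoose_nat_zero m (m+1) (by omega)]
          ring
        · have hi2 : i = p + q + 1 := by omega
          subst hi2
          unfold Tt
          rcases le_or_gt p q with hpq | hpq
          · have hz : cB (p + (q+1)) ((p:ℤ) - ((((p + q + 1 : ℕ)):ℤ) - p)) = 0 :=
              cB_neg (by omega)
            rw [hz]; ring
          · have e1 : ((p:ℤ) + ((((p + q + 1 : ℕ)):ℤ) - p)) = ((p + q + 1 : ℕ):ℤ) := by omega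
            have e2 : (q:ℚ) + (((((p + q + 1 : ℕ):ℤ) - (p:ℤ) : ℤ)) : ℚ) = ((2 * q + 1 : ℕ):ℚ) := by
              push_cast; ring
            rw [e1, e2, Gz_natCast, gchoose_nat_zero (2*q+1) (p+q+1) (by omega)]
            ring
      have hR : gchoose (q:ℚ) p * gchoose ((q:ℚ) - p) (q + 1) = 0 := by
        rcases le_or_gt p q with hpq | hpq
        · have e : (q:ℚ) - (p:ℚ) = ((q - p : ℕ):ℚ) := by push_cast [hpq]; ring
          rw [e, gchoose_nat_zero (q - p) (q + 1) (by omega)]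
          ring
        · rw [gchoose_nat_zero q p hpq]; ring
      rw [hL, hR]
    · have hstep := step p q x
      have hg : gchoose (x - p) (q + 1) * ((q:ℚ) + 1) = gchoose (x - p) q * (x - p - q) :=
        gchoose_succ (x - p) q
      have hne : (2 * ((q:ℚ) + 1) * (x - (q:ℚ))) ≠ 0 := by
        have h1 : (x - (q:ℚ)) ≠ 0 := sub_ne_zero.mpr hx
        have h2 : ((q:ℚ) + 1) ≠ 0 := by positivity
        exact mul_ne_zero (mul_ne_zero two_ne_zero h2) h1
      apply mul_left_cancel₀ hne
      rw [hstep, IH]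
      linear_combination (-(2 * (x - (q:ℚ)) * gchoose x p)) * hg

lemma choose_cast_ne {k n : ℕ} (h : k ≤ n) : ((n.choose k : ℕ) : ℚ) ≠ 0 := by
  exact_mod_cast (Nat.choose_pos h).ne'

-- natural-index form of Tt at positive k = i
lemma Tt_pos (p q : ℕ) (x : ℚ) (i : ℕ) (hip : i ≤ p) (hiq : i ≤ q) :
    Tt p q x (i : ℤ) = (-1 : ℚ) ^ i * ((p + q).choose (p - i) : ℚ) *
      gchoose (x + i) (p + i) * gchoose (x - i) (q - i) := by
  unfold Tt
  rw [show ((p : ℤ) - i) = ((p - i : ℕ) : ℤ) by omega,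
    show ((p : ℤ) + i) = ((p + i : ℕ) : ℤ) by omega,
    show ((q : ℤ) - i) = ((q - i : ℕ) : ℤ) by omega,
    cB_natCast, Gz_natCast, Gz_natCast, zpow_natCast]
  norm_num

lemma Tt_negg (p q : ℕ) (x : ℚ) (i : ℕ) (hip : i ≤ p) (hiq : i ≤ q) :
    Tt p q x (-(i : ℤ)) = (-1 : ℚ) ^ i * ((p + q).choose (p + i) : ℚ) *
      gchoose (x - i) (p - i) * gchoose (x + i) (q + i) := by
  unfold Tt
  rw [show ((p : ℤ) - -(i:ℤ)) = ((p + i : ℕ) : ℤ) by omega,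
    show ((p : ℤ) + -(i:ℤ)) = ((p - i : ℕ) : ℤ) by omega,
    show ((q : ℤ) - -(i:ℤ)) = ((q + i : ℕ) : ℤ) by omega,
    cB_natCast, Gz_natCast, Gz_natCast]
  have hz : (-1 : ℚ) ^ (-(i:ℤ)) = (-1 : ℚ) ^ i := by
    rw [zpow_neg, zpow_natCast, ← inv_pow, inv_neg, inv_one]
  rw [hz]
  push_cast
  ring_nf

-- scalar binomial identities
lemma N1 (p q i : ℕ) (hip : i ≤ p) (hiq : i ≤ q) :
    ((p + q).choose (p - i) : ℚ) * ((q + i).choose i : ℚ)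
      = ((p + q).choose p : ℚ) * (p.choose i : ℚ) := by
  rw [Nat.cast_choose ℚ (show p - i ≤ p + q by omega),
    Nat.cast_choose ℚ (show i ≤ q + i by omega),
    Nat.cast_choose ℚ (show p ≤ p + q by omega),
    Nat.cast_choose ℚ hip,
    show p + q - (p - i) = q + i by omega, show q + i - i = q by omega,
    show p + q - p = q by omega]
  field_simp

lemma N2 (p q i : ℕ) (hip : i ≤ p) (hiq : i ≤ q) :
    ((p + q).choose (p + i) : ℚ) * ((p + i).choose i : ℚ)
      = ((p + q).choose p : ℚ) * (q.choose i : ℚ) := by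
  rw [Nat.cast_choose ℚ (show p + i ≤ p + q by omega),
    Nat.cast_choose ℚ (show i ≤ p + i by omega),
    Nat.cast_choose ℚ (show p ≤ p + q by omega),
    Nat.cast_choose ℚ hiq,
    show p + q - (p + i) = q - i by omega, show p + i - i = p by omega,
    show p + q - p = q by omega]
  field_simp

lemma central (i : ℕ) (hi : 1 ≤ i) :
    ((2 * i).choose i : ℚ) = 2 * ((2 * i - 1).choose (i - 1) : ℚ) := by
  have h := Nat.add_one_mul_choose_eq (2 * i - 1) (i - 1)
  rw [show 2 * i - 1 + 1 = 2 * i by omega, show i - 1 + 1 = i by omega] at h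
  have h' : (2 * i : ℚ) * ((2 * i - 1).choose (i - 1) : ℚ) = ((2 * i).choose i : ℚ) * i := by
    exact_mod_cast congrArg (fun z : ℕ => (z : ℚ)) h
  have hi' : (i : ℚ) ≠ 0 := by positivity
  apply mul_right_cancel₀ hi'
  linarith [h']

lemma per_i (p q : ℕ) (x : ℚ) (i : ℕ) (hi : 1 ≤ i) (hip : i ≤ p) (hiq : i ≤ q) :
    ((p + q).choose p : ℚ) *
      ((-1 : ℚ) ^ i * (gchoose (x + i) i * gchoose x i * (gchoose (2 * (i : ℚ)) i) ^ 2) /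
        (2 * (gchoose (2 * (i : ℚ) - 1) (i - 1)) ^ 2) *
        (gchoose (x - i) (p - i) * gchoose (x - i) (q - i)) /
        (gchoose ((p : ℚ) + i) i * gchoose ((q : ℚ) + i) i))
      = Tt p q x (i : ℤ) + Tt p q x (-(i : ℤ)) := by
  -- abbreviations
  set g1 := gchoose (x + i) i with hg1
  set g2 := gchoose x i with hg2
  set g3 := gchoose (x - i) (p - i) with hg3
  set g4 := gchoose (x - i) (q - i) with hg4
  have hs1 : gchoose (2 * (i : ℚ)) i = ((2 * i).choose i : ℚ) := by
    rw [show (2 * (i:ℚ)) = ((2 * i : ℕ) : ℚ) by push_cast; ring, gchoose_natCast]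
  have hs2 : gchoose (2 * (i : ℚ) - 1) (i - 1) = ((2 * i - 1).choose (i - 1) : ℚ) := by
    rw [show (2 * (i:ℚ) - 1) = ((2 * i - 1 : ℕ) : ℚ) by push_cast [show 1 ≤ 2 * i by omega]; ring,
      gchoose_natCast]
  have hs4p : gchoose ((p : ℚ) + i) i = ((p + i).choose i : ℚ) := by
    rw [show ((p:ℚ) + i) = ((p + i : ℕ) : ℚ) by push_cast; ring, gchoose_natCast]
  have hs4q : gchoose ((q : ℚ) + i) i = ((q + i).choose i : ℚ) := by
    rw [show ((q:ℚ) + i) = ((q + i : ℕ) : ℚ) by push_cast; ring, gchoose_natCast]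
  have hc1 : ((2 * i - 1).choose (i - 1) : ℚ) ≠ 0 := choose_cast_ne (by omega)
  have hcpi : ((p + i).choose i : ℚ) ≠ 0 := choose_cast_ne (by omega)
  have hcqi : ((q + i).choose i : ℚ) ≠ 0 := choose_cast_ne (by omega)
  have hcp_i : (p.choose i : ℚ) ≠ 0 := choose_cast_ne hip
  have hcq_i : (q.choose i : ℚ) ≠ 0 := choose_cast_ne hiq
  -- split identities
  have e1 : gchoose (x + i) (p + i) * ((p + i).choose i : ℚ) = g1 * gchoose x p := by
    have h := gchoose_split (x + i) i p
    rw [show i + p = p + i by omega, show x + (i:ℚ) - i = x by ring] at h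
    exact h
  have e2 : gchoose x p * (p.choose i : ℚ) = g2 * g3 := by
    have h := gchoose_split x i (p - i)
    rw [show i + (p - i) = p by omega] at h
    rw [show p.choose i = p.choose (p - i) by rw [Nat.choose_symm hip]] at h ⊢
    exact h
  have e3 : gchoose (x + i) (q + i) * ((q + i).choose i : ℚ) = g1 * gchoose x q := by
    have h := gchoose_split (x + i) i q
    rw [show i + q = q + i by omega, show x + (i:ℚ) - i = x by ring] at h
    exact h
  have e4 : gchoose x q * (q.choose i : ℚ) = g2 * g4 := by
    have h := gchoose_split x i (q - i)
    rw [show i + (q - i) = q by omega] at h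
    rw [show q.choose i = q.choose (q - i) by rw [Nat.choose_symm hiq]] at h ⊢
    exact h
  have hTi : Tt p q x (i : ℤ) * ((p + i).choose i : ℚ) * (p.choose i : ℚ)
      = (-1:ℚ)^i * ((p + q).choose (p - i) : ℚ) * g1 * g2 * g3 * g4 := by
    rw [Tt_pos p q x i hip hiq]
    linear_combination ((-1:ℚ)^i * ((p + q).choose (p - i) : ℚ) * g4 * (p.choose i : ℚ)) * e1 +
      ((-1:ℚ)^i * ((p + q).choose (p - i) : ℚ) * g4 * g1) * e2
  have hTmi : Tt p q x (-(i : ℤ)) * ((q + i).choose i : ℚ) * (q.choose i : ℚ)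
      = (-1:ℚ)^i * ((p + q).choose (p + i) : ℚ) * g1 * g2 * g3 * g4 := by
    rw [Tt_negg p q x i hip hiq]
    linear_combination ((-1:ℚ)^i * ((p + q).choose (p + i) : ℚ) * g3 * (q.choose i : ℚ)) * e3 +
      ((-1:ℚ)^i * ((p + q).choose (p + i) : ℚ) * g3 * g1) * e4
  have hn1 := N1 p q i hip hiq
  have hn2 := N2 p q i hip hiq
  rw [hs1, hs2, hs4p, hs4q, central i hi]
  set Cpq := ((p + q).choose p : ℚ)
  set Cpmi := ((p + q).choose (p - i) : ℚ)
  set Cppi := ((p + q).choose (p + i) : ℚ)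
  set Cpi := ((p + i).choose i : ℚ)
  set Cqi := ((q + i).choose i : ℚ)
  set Cp := (p.choose i : ℚ)
  set Cq := (q.choose i : ℚ)
  set c1 := ((2 * i - 1).choose (i - 1) : ℚ)
  have hden : Cpi * Cqi * Cp * Cq * (2 * c1 ^ 2) ≠ 0 := by
    apply mul_ne_zero
    apply mul_ne_zero
    apply mul_ne_zero
    apply mul_ne_zero hcpi hcqi
    exact hcp_i
    exact hcq_i
    positivity
  apply mul_right_cancel₀ hden
  have lhs_eq : Cpq * ((-1 : ℚ) ^ i * (g1 * g2 * (2 * c1) ^ 2) / (2 * c1 ^ 2) *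
        (g3 * g4) / (Cpi * Cqi)) * (Cpi * Cqi * Cp * Cq * (2 * c1 ^ 2))
      = 2 * Cpq * (-1:ℚ)^i * g1 * g2 * g3 * g4 * Cp * Cq * (2 * c1 ^ 2) := by
    field_simp
  rw [lhs_eq]
  linear_combination (-(Cqi * Cq * (2 * c1 ^ 2))) * hTi + (-(Cpi * Cp * (2 * c1 ^ 2))) * hTmi +
    (-((-1:ℚ)^i * g1 * g2 * g3 * g4 * Cq * (2 * c1 ^ 2))) * hn1 +
    (-((-1:ℚ)^i * g1 * g2 * g3 * g4 * Cp * (2 * c1 ^ 2))) * hn2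

lemma sum_Icc_one (m : ℕ) (f : ℕ → ℚ) :
    ∑ i ∈ Finset.Icc 1 m, f i = ∑ j ∈ Finset.range m, f (j + 1) := by
  induction m with
  | zero => simp
  | succ m ih => rw [Finset.sum_Icc_succ_top (by omega), ih, Finset.sum_range_succ]

lemma decomp (p q : ℕ) (x : ℚ) :
    Sm p q x = Tt p q x 0 +
      ∑ i ∈ Finset.Icc 1 (min p q), (Tt p q x (i : ℤ) + Tt p q x (-(i : ℤ))) := by
  unfold Sm
  rw [show p + q + 1 = (p + 1) + q by omega, Finset.sum_range_add, Finset.sum_range_succ,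
    show ((p:ℕ):ℤ) - (p:ℤ) = 0 by omega]
  have hneg : ∑ i ∈ Finset.range p, Tt p q x ((i:ℤ) - p)
      = ∑ j ∈ Finset.range (min p q), Tt p q x (-((j:ℤ) + 1)) := by
    rw [← Finset.sum_range_reflect (fun i => Tt p q x ((i:ℤ) - p)) p]
    rw [Finset.sum_congr rfl (fun j hj => by
      rw [show (((p - 1 - j : ℕ)):ℤ) - (p:ℤ) = -((j:ℤ) + 1) by
        have := Finset.mem_range.mp hj; omega])]
    refine (Finset.sum_subset (Finset.range_subset_range.mpr (by omega)) ?_).symm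
    intro j hj hnj
    have h1 : j < p := Finset.mem_range.mp hj
    have h2 : ¬ j < min p q := fun h => hnj (Finset.mem_range.mpr h)
    unfold Tt
    rw [show ((p:ℤ) - -((j:ℤ) + 1)) = ((p + j + 1 : ℕ) : ℤ) by omega, cB_natCast,
      Nat.choose_eq_zero_of_lt (by omega), Nat.cast_zero]
    ring
  have hpos : ∑ j ∈ Finset.range q, Tt p q x (((p + 1 + j : ℕ) : ℤ) - p)
      = ∑ j ∈ Finset.range (min p q), Tt p q x ((j:ℤ) + 1) := by
    rw [Finset.sum_congr rfl (fun j _ => by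
      rw [show (((p + 1 + j : ℕ)):ℤ) - (p:ℤ) = (j:ℤ) + 1 by omega])]
    refine (Finset.sum_subset (Finset.range_subset_range.mpr (by omega)) ?_).symm
    intro j hj hnj
    have h1 : j < q := Finset.mem_range.mp hj
    have h2 : ¬ j < min p q := fun h => hnj (Finset.mem_range.mpr h)
    unfold Tt
    rw [cB_neg (show (p:ℤ) - ((j:ℤ) + 1) < 0 by omega)]
    ring
  rw [hneg, hpos, sum_Icc_one (min p q) (fun i => Tt p q x (i : ℤ) + Tt p q x (-(i : ℤ)))]
  push_cast
  rw [Finset.sum_add_distrib]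
  ring

lemma Tt_zero' (p q : ℕ) (x : ℚ) :
    Tt p q x 0 = ((p + q).choose p : ℚ) * (gchoose x p * gchoose x q) := by
  unfold Tt
  rw [show ((p:ℤ) - 0) = ((p:ℕ):ℤ) by ring, show ((p:ℤ) + 0) = ((p:ℕ):ℤ) by ring,
    show ((q:ℤ) - 0) = ((q:ℕ):ℤ) by ring, cB_natCast, Gz_natCast, Gz_natCast]
  norm_num
  ring

theorem final (p q : ℕ) (x : ℚ) :
    gchoose x (p + q) = gchoose x p * gchoose x q +
      ∑ i ∈ Finset.Icc 1 (min p q), (-1 : ℚ) ^ i *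
        (gchoose (x + i) i * gchoose x i * (gchoose (2 * (i : ℚ)) i) ^ 2) /
        (2 * (gchoose (2 * (i : ℚ) - 1) (i - 1)) ^ 2) *
        (gchoose (x - i) (p - i) * gchoose (x - i) (q - i)) /
        (gchoose ((p : ℚ) + i) i * gchoose ((q : ℚ) + i) i) := by
  have hCne : ((p + q).choose p : ℚ) ≠ 0 := choose_cast_ne (by omega)
  apply mul_left_cancel₀ hCne
  have hsplit := gchoose_split x p q
  have hmain := main_id p q x
  have hdec := decomp p q x
  calc ((p + q).choose p : ℚ) * gchoose x (p + q)
      = gchoose x p * gchoose (x - p) q := by linear_combination hsplit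
    _ = Sm p q x := hmain.symm
    _ = Tt p q x 0 + ∑ i ∈ Finset.Icc 1 (min p q), (Tt p q x (i : ℤ) + Tt p q x (-(i : ℤ))) := hdec
    _ = ((p + q).choose p : ℚ) * (gchoose x p * gchoose x q) +
        ∑ i ∈ Finset.Icc 1 (min p q), ((p + q).choose p : ℚ) *
          ((-1 : ℚ) ^ i *
            (gchoose (x + i) i * gchoose x i * (gchoose (2 * (i : ℚ)) i) ^ 2) /
            (2 * (gchoose (2 * (i : ℚ) - 1) (i - 1)) ^ 2) *
            (gchoose (x - i) (p - i) * gchoose (x - i) (q - i)) /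
            (gchoose ((p : ℚ) + i) i * gchoose ((q : ℚ) + i) i)) := by
        rw [Tt_zero']
        congr 1
        refine Finset.sum_congr rfl (fun i hi => ?_)
        have hm := Finset.mem_Icc.mp hi
        exact (per_i p q x i hm.1 (by omega) (by omega)).symm
    _ = ((p + q).choose p : ℚ) * (gchoose x p * gchoose x q +
        ∑ i ∈ Finset.Icc 1 (min p q), (-1 : ℚ) ^ i *
          (gchoose (x + i) i * gchoose x i * (gchoose (2 * (i : ℚ)) i) ^ 2) /
          (2 * (gchoose (2 * (i : ℚ) - 1) (i - 1)) ^ 2) *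
          (gchoose (x - i) (p - i) * gchoose (x - i) (q - i)) /
          (gchoose ((p : ℚ) + i) i * gchoose ((q : ℚ) + i) i)) := by
        rw [mul_add, Finset.mul_sum]

theorem part2 (x : ℚ) : gchoose x 2 = x ^ 2 - x * (x + 1) / 2 := by
  unfold gchoose
  rw [Finset.prod_range_succ, Finset.prod_range_succ, Finset.prod_range_zero]
  norm_num [Nat.factorial]
  ring


theorem stmt16 (p q : ℕ) (x : ℚ) :
    (gchoose x (p + q) = gchoose x p * gchoose x q +
      ∑ i ∈ Finset.Icc 1 (min p q), (-1 : ℚ) ^ i *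
        (gchoose (x + i) i * gchoose x i * (gchoose (2 * (i : ℚ)) i) ^ 2) /
        (2 * (gchoose (2 * (i : ℚ) - 1) (i - 1)) ^ 2) *
        (gchoose (x - i) (p - i) * gchoose (x - i) (q - i)) /
        (gchoose ((p : ℚ) + i) i * gchoose ((q : ℚ) + i) i)) ∧
    gchoose x 2 = x ^ 2 - x * (x + 1) / 2 :=
  ⟨final p q x, part2 x⟩
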